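/- For any ordered r-tuple (i_1,...,i_r) of nonnegative integers with ∑ i_j > 0 and any prime p, ν_p(∑_j i_j) ≤ ν_p(∑_j i_j·j) + ν_p of the multinomial coefficient (∑ i_j)!/(i_1!·...·i_r!). -/

import Mathlib

open Finset Nat

lemma key_mult {r : ℕ} (I : Fin r → ℕ) (j : Fin r) (hj : 0 < I j) :
    I j * Nat.multinomial Finset.univ I =
      (∑ k, I k) * Nat.multinomial Finset.univ (Function.update I j (I j - 1)) := by
  set I' := Function.update I j (I j - 1) with hI'
  have hprod : I j * ∏ k, (I' k)! = ∏ k, (I k)! := by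
    rw [← Finset.mul_prod_erase univ (fun k => (I' k)!) (mem_univ j),
        ← Finset.mul_prod_erase univ (fun k => (I k)!) (mem_univ j)]
    have h1 : ∏ k ∈ univ.erase j, (I' k)! = ∏ k ∈ univ.erase j, (I k)! := by
      refine Finset.prod_congr rfl fun k hk => ?_
      rw [hI', Function.update_of_ne (Finset.ne_of_mem_erase hk)]
    rw [h1, hI', Function.update_self, ← mul_assoc, Nat.mul_factorial_pred hj.ne']
  have hsum : ∑ k, I' k = (∑ k, I k) - 1 := by
    rw [← Finset.add_sum_erase univ I' (mem_univ j),
        ← Finset.add_sum_erase univ I (mem_univ j)]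
    have h1 : ∑ k ∈ univ.erase j, I' k = ∑ k ∈ univ.erase j, I k := by
      refine Finset.sum_congr rfl fun k hk => ?_
      rw [hI', Function.update_of_ne (Finset.ne_of_mem_erase hk)]
    rw [h1, hI', Function.update_self]
    omega
  have hsumpos : 0 < ∑ k, I k :=
    lt_of_lt_of_le hj (Finset.single_le_sum (fun k _ => Nat.zero_le _) (mem_univ j))
  have hP : 0 < ∏ k, (I' k)! := Finset.prod_pos fun k _ => Nat.factorial_pos _
  apply Nat.eq_of_mul_eq_mul_left hP
  calc (∏ k, (I' k)!) * (I j * Nat.multinomial Finset.univ I)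
      = I j * (∏ k, (I' k)!) * Nat.multinomial Finset.univ I := by ring
    _ = (∏ k, (I k)!) * Nat.multinomial Finset.univ I := by rw [hprod]
    _ = (∑ k, I k)! := Nat.multinomial_spec _ _
    _ = (∑ k, I k) * ((∑ k, I k) - 1)! := (Nat.mul_factorial_pred hsumpos.ne').symm
    _ = (∑ k, I k) * (∑ k, I' k)! := by rw [hsum]
    _ = (∑ k, I k) * ((∏ k, (I' k)!) * Nat.multinomial Finset.univ I') := by
        rw [Nat.multinomial_spec]
    _ = (∏ k, (I' k)!) * ((∑ k, I k) * Nat.multinomial Finset.univ I') := by ring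

theorem val_sum_le {p : ℕ} (hp : p.Prime) {r : ℕ} (I : Fin r → ℕ)
    (h : 0 < ∑ j, I j) :
    padicValNat p (∑ j, I j) ≤
      padicValNat p (∑ j, I j * (j.1 + 1)) +
        padicValNat p (Nat.multinomial Finset.univ I) := by
  haveI : Fact p.Prime := ⟨hp⟩
  set M := Nat.multinomial Finset.univ I with hM
  have hMpos : 0 < M := Nat.multinomial_pos _ _
  have hSpos : 0 < ∑ j, I j * (j.1 + 1) :=
    lt_of_lt_of_le h (Finset.sum_le_sum fun j _ =>
      Nat.le_mul_of_pos_right _ (Nat.succ_pos _))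
  have hdvd : (∑ j, I j) ∣ (∑ j, I j * (j.1 + 1)) * M := by
    rw [Finset.sum_mul]
    refine Finset.dvd_sum fun j _ => ?_
    rcases Nat.eq_zero_or_pos (I j) with h0 | h0
    · simp [h0]
    · exact ⟨Nat.multinomial Finset.univ (Function.update I j (I j - 1)) * (j.1 + 1),
        by rw [mul_right_comm, key_mult I j h0]; ring⟩
  have hSM : (∑ j, I j * (j.1 + 1)) * M ≠ 0 := by positivity
  have h1 : p ^ padicValNat p (∑ j, I j) ∣ (∑ j, I j * (j.1 + 1)) * M :=
    dvd_trans pow_padicValNat_dvd hdvd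
  have h2 := (padicValNat_dvd_iff_le hSM).mp h1
  rwa [padicValNat.mul hSpos.ne' hMpos.ne'] at h2
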